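/- For ρ ≥ 1 and p ∈ R^d, the Fourier multiplier λ_ρ(p) = (1/((2ρ+1)^d − 1)) Σ_{0<|y|_∞≤ρ} (1 − cos(p·y)) satisfies the product formula λ_ρ(p) = ((2ρ+1)^d/((2ρ+1)^d − 1)) (1 − Π_{i=1}^d sin((2ρ+1)p_i/2) / ((2ρ+1) sin(p_i/2))). -/

import Mathlib

/-- The standard range-`ρ` step distribution `J_ρ = {x ∈ ℤ^d \ {0} : |x|_∞ ≤ ρ}`. -/
noncomputable def Jrho (d ρ : ℕ) : Finset (Fin d → ℤ) :=
  (Fintype.piFinset fun _ : Fin d => Finset.Icc (-(ρ : ℤ)) (ρ : ℤ)).erase 0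

lemma dirichlet (x : ℂ) (ρ : ℕ) :
    (∑ a ∈ Finset.Icc (-(ρ:ℤ)) (ρ:ℤ), Complex.exp ((a:ℂ) * x * Complex.I)) * Complex.sin (x/2)
      = Complex.sin ((2*(ρ:ℂ)+1) * x / 2) := by
  induction ρ with
  | zero =>
      norm_num
  | succ n ih =>
      have hset : Finset.Icc (-(n+1:ℤ)) ((n:ℤ)+1)
          = insert (-(n+1:ℤ)) (insert ((n:ℤ)+1) (Finset.Icc (-(n:ℤ)) (n:ℤ))) := by
        ext a; simp [Finset.mem_Icc]; omega
      have h1 : (-(n+1:ℤ)) ∉ insert ((n:ℤ)+1) (Finset.Icc (-(n:ℤ)) (n:ℤ)) := by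
        simp [Finset.mem_Icc]; omega
      have h2 : ((n:ℤ)+1) ∉ Finset.Icc (-(n:ℤ)) (n:ℤ) := by
        simp
      have e1 : Complex.exp (((-(n+1:ℤ)):ℂ) * x * Complex.I)
          = Complex.cos (((n:ℂ)+1)*x) - Complex.sin (((n:ℂ)+1)*x) * Complex.I := by
        have h := Complex.exp_mul_I (-(((n:ℂ)+1) * x))
        rw [show ((-(n+1:ℤ)):ℂ) * x * Complex.I = (-(((n:ℂ)+1) * x)) * Complex.I by push_cast; ring,
          h, Complex.cos_neg, Complex.sin_neg]
        ring
      have e2 : Complex.exp ((((n:ℤ)+1:ℤ):ℂ) * x * Complex.I)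
          = Complex.cos (((n:ℂ)+1)*x) + Complex.sin (((n:ℂ)+1)*x) * Complex.I := by
        have h := Complex.exp_mul_I (((n:ℂ)+1) * x)
        rw [show (((n:ℤ)+1:ℤ):ℂ) * x * Complex.I = (((n:ℂ)+1) * x) * Complex.I by push_cast; ring, h]
      have trig : Complex.sin ((2*((n:ℂ)+1)+1) * x / 2)
          = Complex.sin ((2*(n:ℂ)+1)*x/2) + 2 * Complex.cos (((n:ℂ)+1)*x) * Complex.sin (x/2) := by
        have hu : (2*((n:ℂ)+1)+1) * x / 2 = ((n:ℂ)+1)*x + x/2 := by ring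
        have hv : (2*(n:ℂ)+1)*x/2 = ((n:ℂ)+1)*x - x/2 := by ring
        rw [hu, hv, Complex.sin_add, Complex.sin_sub]; ring
      push_cast
      rw [hset, Finset.sum_insert h1, Finset.sum_insert h2]
      push_cast at e1 e2 trig ⊢
      rw [e1, e2, trig]
      linear_combination ih

theorem stmt4 (d ρ : ℕ) (hρ : 1 ≤ ρ) (p : Fin d → ℝ)
    (hp : ∀ i, Real.sin (p i / 2) ≠ 0) :
    1 / ((2 * (ρ : ℝ) + 1) ^ d - 1) *
        ∑ y ∈ Jrho d ρ, (1 - Real.cos (∑ i, p i * (y i : ℝ)))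
      = (2 * (ρ : ℝ) + 1) ^ d / ((2 * (ρ : ℝ) + 1) ^ d - 1) *
          (1 - ∏ i, Real.sin ((2 * (ρ : ℝ) + 1) * p i / 2) /
            ((2 * (ρ : ℝ) + 1) * Real.sin (p i / 2))) := by
  classical
  set box := Fintype.piFinset fun _ : Fin d => Finset.Icc (-(ρ : ℤ)) (ρ : ℤ) with hbox
  set N : ℝ := (2 * (ρ : ℝ) + 1) ^ d with hN
  -- each one-dimensional Dirichlet factor
  have factor : ∀ i : Fin d,
      (∑ a ∈ Finset.Icc (-(ρ:ℤ)) (ρ:ℤ), Complex.exp ((a:ℂ) * (p i : ℂ) * Complex.I))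
        = ((Real.sin ((2*(ρ:ℝ)+1) * p i / 2) / Real.sin (p i / 2) : ℝ) : ℂ) := by
    intro i
    have hs : Complex.sin ((p i : ℂ)/2) ≠ 0 := by
      rw [show ((p i : ℂ))/2 = ((p i / 2 : ℝ) : ℂ) by push_cast; ring, ← Complex.ofReal_sin]
      exact_mod_cast hp i
    have h := dirichlet (p i : ℂ) ρ
    push_cast
    rw [eq_div_iff hs]
    linear_combination h
  -- the cosine sum over the full box
  have key : ∑ y ∈ box, Real.cos (∑ i, p i * (y i : ℝ))
      = ∏ i, Real.sin ((2*(ρ:ℝ)+1) * p i / 2) / Real.sin (p i / 2) := by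
    have hC : (∑ y ∈ box, Complex.exp (((∑ i, p i * (y i:ℝ) : ℝ) : ℂ) * Complex.I))
        = ((∏ i, Real.sin ((2*(ρ:ℝ)+1) * p i / 2) / Real.sin (p i / 2) : ℝ) : ℂ) := by
      rw [Complex.ofReal_prod, ← Finset.prod_congr rfl (fun i _ => factor i),
        Finset.prod_univ_sum]
      apply Finset.sum_congr rfl
      intro y _
      rw [← Complex.exp_sum]
      congr 1
      push_cast
      rw [Finset.sum_mul]
      exact Finset.sum_congr rfl (fun i _ => by ring)
    have := congrArg Complex.re hC
    rw [Complex.re_sum] at this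
    simp only [Complex.exp_ofReal_mul_I_re] at this
    rw [Complex.ofReal_re] at this
    exact this
  -- cardinality of the box
  have hcard : (box.card : ℝ) = N := by
    rw [hbox, Fintype.card_piFinset]
    simp only [Int.card_Icc, Finset.prod_const, Finset.card_univ, Fintype.card_fin]
    rw [show ((ρ:ℤ) + 1 - -(ρ:ℤ)).toNat = 2 * ρ + 1 by omega, hN]
    push_cast
    ring
  -- zero is in the box
  have h0 : (0 : Fin d → ℤ) ∈ box := by
    simp [hbox, Fintype.mem_piFinset]
  -- sum over Jrho
  have hsum : ∑ y ∈ Jrho d ρ, (1 - Real.cos (∑ i, p i * (y i : ℝ)))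
      = N - ∏ i, Real.sin ((2*(ρ:ℝ)+1) * p i / 2) / Real.sin (p i / 2) := by
    rw [Jrho, ← hbox, Finset.sum_erase_eq_sub h0]
    simp only [Pi.zero_apply, Int.cast_zero, mul_zero, Finset.sum_const_zero, Real.cos_zero]
    rw [Finset.sum_sub_distrib, Finset.sum_const, nsmul_eq_mul, key, hcard]
    ring
  rw [hsum]
  have hNpos : (0:ℝ) < N := by
    rw [hN]; positivity
  have hprod : ∏ i, Real.sin ((2 * (ρ : ℝ) + 1) * p i / 2) /
      ((2 * (ρ : ℝ) + 1) * Real.sin (p i / 2))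
      = (∏ i, Real.sin ((2*(ρ:ℝ)+1) * p i / 2) / Real.sin (p i / 2)) / N := by
    have step : ∀ i : Fin d, Real.sin ((2 * (ρ : ℝ) + 1) * p i / 2) /
        ((2 * (ρ : ℝ) + 1) * Real.sin (p i / 2))
        = (Real.sin ((2*(ρ:ℝ)+1) * p i / 2) / Real.sin (p i / 2)) * (2*(ρ:ℝ)+1)⁻¹ := by
      intro i
      rw [div_eq_mul_inv, div_eq_mul_inv, mul_inv]
      ring
    rw [Finset.prod_congr rfl (fun i _ => step i), Finset.prod_mul_distrib,
      Finset.prod_const, Finset.card_univ, Fintype.card_fin, hN, div_eq_mul_inv, inv_pow]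
  rw [hprod]
  have hN0 : N ≠ 0 := ne_of_gt hNpos
  linear_combination (((2*(ρ:ℝ)+1)^d - 1)⁻¹ *
    (∏ i, Real.sin ((2*(ρ:ℝ)+1) * p i / 2) / Real.sin (p i / 2))) * mul_inv_cancel₀ hN0
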